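/- arXiv:1308.3187 — 4 statements merged into one kernel-verified Lean document; each statement's English description precedes it below -/
import Mathlib

section
/- Let E be an exact couple system over a bounded poset I, and let b ≥ p ≥ q ≥ z and b' ≥ p' ≥ q' ≥ z' in I with z = p' and q = b'. Let d : S^{pz}_{bq} → S^{p'z'}_{b'q'} be the homomorphism characterized by: d sends the class of x ∈ ker(d_{pqz}) to the class of j_{p',q'}(i_{z,p'}(y)) for any y ∈ D_z with i_{z,q}(y) = k_{p,q}(x). Since b' = q ≤ p, one has im(d_{b'p'q'}) ⊆ im(d_{p,p',q'}), so there is a natural surjection S^{p'z'}_{b'q'} = ker(d_{p'q'z'})/im(d_{b'p'q'}) → S^{p'z'}_{p,q'} := ker(d_{p'q'z'})/im(d_{p,p',q'}). Then the kernel of this surjection equals im(d); consequently coker(d) is isomorphic to S^{p'z'}_{p,q'}. -/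
open Function

universe u v

/-- An exact couple system over a bounded poset `I`: abelian groups `E^p_q` for `q ≤ p`,
functorial maps `ℓ`, boundary maps `k_{pq} : E^p_q → D_q` (where `D_p := E^p_⊥`), exact
triangles `D_q → D_p → E^p_q → D_q`, and naturality of `k`. -/
structure ExactCoupleSystem (I : Type u) [PartialOrder I] [BoundedOrder I] where
  /-- the abelian groups `E^p_q` -/
  E : ∀ p q : I, q ≤ p → AddCommGrpCat.{v}
  /-- the structure maps `ℓ : E^p_q → E^{p'}_{q'}` for `p ≤ p'`, `q ≤ q'` -/
  l : ∀ {p q p' q' : I} (h : q ≤ p) (h' : q' ≤ p'), p ≤ p' → q ≤ q' →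
      (E p q h →+ E p' q' h')
  /-- the boundary maps `k_{pq} : E^p_q → D_q` -/
  k : ∀ {p q : I} (h : q ≤ p), (E p q h →+ E q ⊥ bot_le)
  l_id : ∀ {p q : I} (h : q ≤ p), l h h le_rfl le_rfl = AddMonoidHom.id _
  l_comp : ∀ {p q p' q' p'' q'' : I} (h : q ≤ p) (h' : q' ≤ p') (h'' : q'' ≤ p'')
      (hp : p ≤ p') (hq : q ≤ q') (hp' : p' ≤ p'') (hq' : q' ≤ q''),
      (l h' h'' hp' hq').comp (l h h' hp hq) = l h h'' (hp.trans hp') (hq.trans hq')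
  exact_ij : ∀ {p q : I} (h : q ≤ p),
      (l (bot_le : (⊥ : I) ≤ q) (bot_le : (⊥ : I) ≤ p) h le_rfl).range =
        (l (bot_le : (⊥ : I) ≤ p) h le_rfl bot_le).ker
  exact_jk : ∀ {p q : I} (h : q ≤ p),
      (l (bot_le : (⊥ : I) ≤ p) h le_rfl bot_le).range = (k h).ker
  exact_ki : ∀ {p q : I} (h : q ≤ p),
      (k h).range = (l (bot_le : (⊥ : I) ≤ q) (bot_le : (⊥ : I) ≤ p) h le_rfl).ker
  k_nat : ∀ {p q p' q' : I} (h : q ≤ p) (h' : q' ≤ p') (hp : p ≤ p') (hq : q ≤ q'),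
      (l (bot_le : (⊥ : I) ≤ q) (bot_le : (⊥ : I) ≤ q') hq le_rfl).comp (k h) =
        (k h').comp (l h h' hp hq)

namespace ExactCoupleSystem

variable {I : Type u} [PartialOrder I] [BoundedOrder I] (X : ExactCoupleSystem.{u, v} I)

/-- `D_p := E^p_{−∞}`. -/
abbrev D (p : I) := X.E p ⊥ bot_le

/-- `i_{qp} : D_q → D_p`. -/
def i {q p : I} (h : q ≤ p) : X.D q →+ X.D p := X.l bot_le bot_le h le_rfl

/-- `j_{pq} : D_p → E^p_q`. -/
def j {q p : I} (h : q ≤ p) : X.D p →+ X.E p q h := X.l bot_le h le_rfl bot_le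

/-- The differential `d_{pqz} = j_{qz} ∘ k_{pq} : E^p_q → E^q_z`. -/
def dd {z q p : I} (hzq : z ≤ q) (hqp : q ≤ p) : X.E p q hqp →+ X.E q z hzq :=
  (X.j hzq).comp (X.k hqp)

/-- The S-term `S^{pz}_{bq} = ker(d_{pqz}) / im(d_{bpq})` of an exact couple system. -/
abbrev Sterm {z q p b : I} (hzq : z ≤ q) (hqp : q ≤ p) (hpb : p ≤ b) :=
  ↥(X.dd hzq hqp).ker ⧸ (X.dd hqp hpb).range.addSubgroupOf (X.dd hzq hqp).ker

/-- The class in `S^{pz}_{bq}` of an element `x ∈ ker(d_{pqz})`. -/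
def Scls {z q p b : I} (hzq : z ≤ q) (hqp : q ≤ p) (hpb : p ≤ b)
    {x : X.E p q hqp} (hx : x ∈ (X.dd hzq hqp).ker) : X.Sterm hzq hqp hpb :=
  QuotientAddGroup.mk ⟨x, hx⟩

end ExactCoupleSystem

/-- Cokernel of the differential: with `z = p'` and `q = b'`, for the
differential `d : S^{pz}_{bq} → S^{p'z'}_{b'q'}` (characterized as in Statement 11),
one has `im(d_{b'p'q'}) ⊆ im(d_{p,p',q'})`, the natural surjection
`S^{p'z'}_{b'q'} → S^{p'z'}_{p,q'}` has kernel `im(d)`, and hence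
`coker(d) ≅ S^{p'z'}_{p,q'}`. -/
theorem statement13 {I : Type u} [PartialOrder I] [BoundedOrder I]
    (X : ExactCoupleSystem.{u, v} I) {z' q' p' q p b : I}
    (hz'q' : z' ≤ q') (hq'p' : q' ≤ p') (hp'q : p' ≤ q) (hqp : q ≤ p) (hpb : p ≤ b) :
    (X.dd hq'p' hp'q).range ≤ (X.dd hq'p' (hp'q.trans hqp)).range ∧
    ∀ Dh : X.Sterm hp'q hqp hpb →+ X.Sterm hz'q' hq'p' hp'q,
      (∀ (x : X.E p q hqp) (hx : x ∈ (X.dd hp'q hqp).ker)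
        (y : X.D p') (_ : X.i hp'q y = X.k hqp x)
        (hmem : X.j hq'p' (X.i (le_refl p') y) ∈ (X.dd hz'q' hq'p').ker),
        Dh (X.Scls hp'q hqp hpb hx) = X.Scls hz'q' hq'p' hp'q hmem) →
      ∃ π : X.Sterm hz'q' hq'p' hp'q →+ X.Sterm hz'q' hq'p' (hp'q.trans hqp),
        (∀ (x : X.E p' q' hq'p') (hx : x ∈ (X.dd hz'q' hq'p').ker),
          π (X.Scls hz'q' hq'p' hp'q hx) = X.Scls hz'q' hq'p' (hp'q.trans hqp) hx) ∧
        Surjective π ∧ π.ker = Dh.range ∧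
        Nonempty ((X.Sterm hz'q' hq'p' hp'q ⧸ Dh.range) ≃+
          X.Sterm hz'q' hq'p' (hp'q.trans hqp)) := by

  classical
  have hle : (X.dd hq'p' hp'q).range ≤ (X.dd hq'p' (hp'q.trans hqp)).range := by
    rintro w ⟨u, rfl⟩
    refine ⟨X.l hp'q (hp'q.trans hqp) hqp le_rfl u, ?_⟩
    have hk : X.k (hp'q.trans hqp) (X.l hp'q (hp'q.trans hqp) hqp le_rfl u)
        = X.k hp'q u := by
      have h := congrArg (fun f => f u) (X.k_nat hp'q (hp'q.trans hqp) hqp le_rfl)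
      simpa [X.l_id] using h.symm
    simp [ExactCoupleSystem.dd, hk]
  refine ⟨hle, fun Dh hDh => ?_⟩
  set K := (X.dd hz'q' hq'p').ker with hKdef
  set A := (X.dd hq'p' hp'q).range.addSubgroupOf K with hAdef
  set B := (X.dd hq'p' (hp'q.trans hqp)).range.addSubgroupOf K with hBdef
  have hAB : A ≤ B := fun a ha => by
    rw [hBdef, AddSubgroup.mem_addSubgroupOf]
    exact hle ((AddSubgroup.mem_addSubgroupOf).mp ha)
  have hAB' : A ≤ B.comap (AddMonoidHom.id _) := hAB
  set π : X.Sterm hz'q' hq'p' hp'q →+ X.Sterm hz'q' hq'p' (hp'q.trans hqp) :=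
    QuotientAddGroup.map A B (AddMonoidHom.id _) hAB' with hπ
  have hπmk : ∀ (a : ↥K), π (QuotientAddGroup.mk a) = QuotientAddGroup.mk a := by
    intro a; rfl
  have hsurj : Surjective π := by
    intro c
    refine QuotientAddGroup.induction_on c (fun a => ⟨QuotientAddGroup.mk a, hπmk a⟩)
  have hker : π.ker = Dh.range := by
    ext c
    refine QuotientAddGroup.induction_on c (fun a => ?_)
    obtain ⟨w, hw⟩ := a
    constructor
    · intro h
      have hB : (⟨w, hw⟩ : ↥K) ∈ B := by
        have : π (QuotientAddGroup.mk ⟨w, hw⟩) = 0 := h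
        rw [hπmk] at this
        exact (QuotientAddGroup.eq_zero_iff _).mp this
      rw [hBdef, AddSubgroup.mem_addSubgroupOf] at hB
      obtain ⟨u, hu⟩ := hB
      -- u : E^p_{p'},  dd u = j_{p'q'}(k_{pp'} u) = w
      set y : X.D p' := X.k (hp'q.trans hqp) u with hy
      set x : ↥(X.E p q hqp) := X.l (hp'q.trans hqp) hqp le_rfl hp'q u with hxdef
      have hxk : X.i hp'q y = X.k hqp x := by
        have h2 := congrArg (fun f => f u)
          (X.k_nat (hp'q.trans hqp) hqp le_rfl hp'q)
        simpa [ExactCoupleSystem.i, hy, hxdef] using h2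
      have hx : x ∈ (X.dd hp'q hqp).ker := by
        have hykmem : X.i hp'q y ∈ (X.l (bot_le : (⊥:I) ≤ q) hp'q le_rfl bot_le).ker := by
          rw [← X.exact_ij hp'q]
          exact ⟨y, rfl⟩
        have : X.j hp'q (X.k hqp x) = 0 := by
          rw [← hxk]; exact hykmem
        simpa [ExactCoupleSystem.dd] using this
      have hirfl : X.i (le_refl p') y = y := by
        simp [ExactCoupleSystem.i, X.l_id]
      have hu' : X.dd hq'p' (hp'q.trans hqp) u = w := hu
      have hjy : X.j hq'p' (X.i (le_refl p') y) = w := by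
        rw [hirfl, ← hu']; rfl
      have hmem : X.j hq'p' (X.i (le_refl p') y) ∈ (X.dd hz'q' hq'p').ker := by
        rw [hjy]; exact hw
      refine ⟨X.Scls hp'q hqp hpb hx, ?_⟩
      rw [hDh x hx y hxk hmem]
      unfold ExactCoupleSystem.Scls
      congr 1
      exact Subtype.ext hjy
    · rintro ⟨s, hs⟩
      refine QuotientAddGroup.induction_on s (fun a' hs => ?_) hs
      obtain ⟨x, hx⟩ := a'
      -- k_{pq} x ∈ ker j_{q,p'} = range i_{p',q}
      have hkx : X.k hqp x ∈ (X.l (bot_le : (⊥:I) ≤ q) hp'q le_rfl bot_le).ker := by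
        simpa [ExactCoupleSystem.dd, ExactCoupleSystem.j] using hx
      rw [← X.exact_ij hp'q] at hkx
      obtain ⟨y, hyk0⟩ := hkx
      have hyk : X.i hp'q y = X.k hqp x := hyk0
      have hirfl : X.i (le_refl p') y = y := by
        simp [ExactCoupleSystem.i, X.l_id]
      have hjy : X.j hq'p' y ∈ (X.k hq'p').ker := by
        rw [← X.exact_jk hq'p']
        exact ⟨y, rfl⟩
      have hmem : X.j hq'p' (X.i (le_refl p') y) ∈ (X.dd hz'q' hq'p').ker := by
        rw [hirfl]
        have : X.k hq'p' (X.j hq'p' y) = 0 := hjy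
        simp [ExactCoupleSystem.dd, this]
      have hDhx := hDh x hx y hyk hmem
      have hs : X.Scls hz'q' hq'p' hp'q hmem
          = (QuotientAddGroup.mk ⟨w, hw⟩ : X.Sterm hz'q' hq'p' hp'q) := by
        rw [← hDhx]; exact hs
      -- y ∈ ker i_{p',p} = range k_{p,p'}
      have hiy : X.i (hp'q.trans hqp) y = 0 := by
        have h1 : X.i hqp (X.i hp'q y) = 0 := by
          rw [hyk]
          have : X.k hqp x ∈ (X.l (bot_le:(⊥:I) ≤ q) (bot_le:(⊥:I) ≤ p) hqp le_rfl).ker := by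
            rw [← X.exact_ki hqp]; exact ⟨x, rfl⟩
          exact this
        have h2 := congrArg (fun f => f y)
          (X.l_comp (bot_le:(⊥:I) ≤ p') (bot_le:(⊥:I) ≤ q) (bot_le:(⊥:I) ≤ p)
            hp'q le_rfl hqp le_rfl)
        simpa [ExactCoupleSystem.i] using h2.symm.trans h1
      have hyker : y ∈ (X.l (bot_le:(⊥:I) ≤ p') (bot_le:(⊥:I) ≤ p)
          (hp'q.trans hqp) le_rfl).ker := hiy
      rw [← X.exact_ki (hp'q.trans hqp)] at hyker
      obtain ⟨u, hu⟩ := hyker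
      -- j y = dd u ∈ range of the big differential
      have hjyrange : X.j hq'p' y ∈ (X.dd hq'p' (hp'q.trans hqp)).range := by
        refine ⟨u, ?_⟩
        simp [ExactCoupleSystem.dd, hu]
      -- from hs : mk ⟨j (i_refl y), hmem⟩ = mk ⟨w, hw⟩ in K/A, get difference in A
      have hdiff : -(⟨X.j hq'p' (X.i (le_refl p') y), hmem⟩ : ↥K) + ⟨w, hw⟩ ∈ A := by
        exact (QuotientAddGroup.eq (s := A)).mp hs
      have hdiff' : -(X.j hq'p' (X.i (le_refl p') y)) + w
          ∈ (X.dd hq'p' hp'q).range := by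
        rw [hAdef, AddSubgroup.mem_addSubgroupOf] at hdiff
        exact hdiff
      have hwB : (⟨w, hw⟩ : ↥K) ∈ B := by
        rw [hBdef, AddSubgroup.mem_addSubgroupOf]
        have hmem2 : X.j hq'p' (X.i (le_refl p') y)
            + (-(X.j hq'p' (X.i (le_refl p') y)) + w)
            ∈ (X.dd hq'p' (hp'q.trans hqp)).range := by
          refine AddSubgroup.add_mem _ ?_ (hle hdiff')
          rw [hirfl]; exact hjyrange
        simpa [add_neg_cancel_left] using hmem2
      show π (QuotientAddGroup.mk ⟨w, hw⟩) = 0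
      rw [hπmk]
      exact (QuotientAddGroup.eq_zero_iff _).mpr hwB
  refine ⟨π, fun x hx => rfl, hsurj, hker, ?_⟩
  exact ⟨(QuotientAddGroup.quotientAddEquivOfEq hker.symm).trans
    (QuotientAddGroup.quotientKerEquivOfSurjective π hsurj)⟩
end

section
/- Let E be an exact couple system over a bounded poset I, and for p ∈ I let G_p := im(i_{p,∞} : D_p → D_∞). Then: (a) the numerator ker(d_{p,−∞,−∞}) of S^{p,−∞}_{∞,−∞} is all of D_p, and the map sending the class of u ∈ D_p in S^{p,−∞}_{∞,−∞} to i_{p,∞}(u) is a well-defined isomorphism S^{p,−∞}_{∞,−∞} ≅ G_p; (b) for q ≤ p one has G_q ⊆ G_p, the map G_p → S^{p,−∞}_{∞,q} sending i_{p,∞}(u) to the class of j_{p,q}(u) is a well-defined surjective homomorphism with kernel G_q, and consequently S^{p,−∞}_{∞,q} ≅ G_p/G_q. -/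
open Function

universe u v

namespace ExactCoupleSystem

variable {I : Type u} [PartialOrder I] [BoundedOrder I] (X : ExactCoupleSystem.{u, v} I)

lemma j_bot_apply {p : I} (h : (⊥ : I) ≤ p) (x : X.D p) : X.j h x = x :=
  DFunLike.congr_fun (X.l_id h) x

lemma dd_bot_apply {q p : I} (h0 : (⊥ : I) ≤ q) (hqp : q ≤ p)
    (x : X.E p q hqp) : X.dd h0 hqp x = X.k hqp x :=
  X.j_bot_apply h0 (X.k hqp x)

lemma i_comp_apply {a b c : I} (hab : a ≤ b) (hbc : b ≤ c) (x : X.D a) :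
    X.i hbc (X.i hab x) = X.i (hab.trans hbc) x :=
  DFunLike.congr_fun (X.l_comp bot_le bot_le bot_le hab le_rfl hbc le_rfl) x

lemma j_i_apply {q p : I} (hqp : q ≤ p) (x : X.D q) : X.j hqp (X.i hqp x) = 0 := by
  have : X.i hqp x ∈ (X.j hqp).ker := by
    rw [ExactCoupleSystem.j, ← X.exact_ij hqp]
    exact ⟨x, rfl⟩
  exact this

lemma k_j_apply {q p : I} (hqp : q ≤ p) (x : X.D p) : X.k hqp (X.j hqp x) = 0 := by
  have : X.j hqp x ∈ (X.k hqp).ker := by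
    rw [← X.exact_jk hqp]
    exact ⟨x, rfl⟩
  exact this

lemma i_k_apply {q p : I} (hqp : q ≤ p) (x : X.E p q hqp) :
    X.i hqp (X.k hqp x) = 0 := by
  have : X.k hqp x ∈ (X.i hqp).ker := by
    rw [ExactCoupleSystem.i, ← X.exact_ki hqp]
    exact ⟨x, rfl⟩
  exact this

lemma mem_range_j_of_k_eq_zero {q p : I} (hqp : q ≤ p) {x : X.E p q hqp}
    (hx : X.k hqp x = 0) : ∃ u : X.D p, X.j hqp u = x := by
  have : x ∈ (X.l (bot_le : (⊥ : I) ≤ p) hqp le_rfl bot_le).range := by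
    rw [X.exact_jk hqp]; exact hx
  exact this

lemma mem_range_i_of_j_eq_zero {q p : I} (hqp : q ≤ p) {x : X.D p}
    (hx : X.j hqp x = 0) : ∃ u : X.D q, X.i hqp u = x := by
  have : x ∈ (X.l (bot_le : (⊥ : I) ≤ q) (bot_le : (⊥ : I) ≤ p) hqp le_rfl).range := by
    rw [X.exact_ij hqp]; exact hx
  exact this

lemma mem_range_k_of_i_eq_zero {q p : I} (hqp : q ≤ p) {x : X.D q}
    (hx : X.i hqp x = 0) : ∃ w : X.E p q hqp, X.k hqp w = x := by
  have : x ∈ (X.k hqp).range := by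
    rw [X.exact_ki hqp]; exact hx
  exact this

end ExactCoupleSystem


/-- ∞-page as filtration quotients: with `G_p := im(i_{p,∞})`:
(a) the numerator of `S^{p,−∞}_{∞,−∞}` is all of `D_p` and `u ↦ i_{p,∞}(u)` is a
well-defined isomorphism `S^{p,−∞}_{∞,−∞} ≅ G_p`; (b) for `q ≤ p`, `G_q ⊆ G_p`, and
`i_{p,∞}(u) ↦ class of j_{pq}(u)` is a well-defined surjection `G_p → S^{p,−∞}_{∞,q}`
with kernel `G_q`, so `S^{p,−∞}_{∞,q} ≅ G_p/G_q`. -/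
theorem statement14 {I : Type u} [PartialOrder I] [BoundedOrder I]
    (X : ExactCoupleSystem.{u, v} I) {q p : I} (hqp : q ≤ p) :
    ((X.dd (le_refl (⊥ : I)) (bot_le : (⊥ : I) ≤ p)).ker = ⊤) ∧
    (∃ φ : X.Sterm (le_refl (⊥ : I)) (bot_le : (⊥ : I) ≤ p) le_top →+
        ↥(X.i (le_top : p ≤ ⊤)).range,
      (∀ (u : X.D p) (hu : u ∈ (X.dd (le_refl (⊥ : I)) (bot_le : (⊥ : I) ≤ p)).ker),
        φ (X.Scls (le_refl (⊥ : I)) (bot_le : (⊥ : I) ≤ p) le_top hu) =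
          ⟨X.i (le_top : p ≤ ⊤) u, AddMonoidHom.mem_range.mpr ⟨u, rfl⟩⟩) ∧
      Bijective φ) ∧
    (X.i (le_top : q ≤ ⊤)).range ≤ (X.i (le_top : p ≤ ⊤)).range ∧
    ∃ ψ : ↥(X.i (le_top : p ≤ ⊤)).range →+ X.Sterm (bot_le : (⊥ : I) ≤ q) hqp le_top,
      (∀ (u : X.D p) (hker : X.j hqp u ∈ (X.dd (bot_le : (⊥ : I) ≤ q) hqp).ker),
        ψ ⟨X.i (le_top : p ≤ ⊤) u, AddMonoidHom.mem_range.mpr ⟨u, rfl⟩⟩ =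
          X.Scls (bot_le : (⊥ : I) ≤ q) hqp le_top hker) ∧
      Surjective ψ ∧
      ψ.ker = ((X.i (le_top : q ≤ ⊤)).range).addSubgroupOf
        (X.i (le_top : p ≤ ⊤)).range ∧
      Nonempty (X.Sterm (bot_le : (⊥ : I) ≤ q) hqp le_top ≃+
        (↥(X.i (le_top : p ≤ ⊤)).range ⧸
          ((X.i (le_top : q ≤ ⊤)).range).addSubgroupOf (X.i (le_top : p ≤ ⊤)).range)) := by

  classical
  -- Part (a): numerator is everything
  have hkertop : (X.dd (le_refl (⊥ : I)) (bot_le : (⊥ : I) ≤ p)).ker = ⊤ := by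
    ext x
    simp only [AddMonoidHom.mem_ker, AddSubgroup.mem_top, iff_true]
    rw [X.dd_bot_apply _ _]
    have h := X.k_j_apply (bot_le : (⊥ : I) ≤ p) x
    rwa [X.j_bot_apply] at h
  refine ⟨hkertop, ?_, ?_, ?_⟩
  · -- the isomorphism φ
    set N := (X.dd (le_refl (⊥ : I)) (bot_le : (⊥ : I) ≤ p)).ker with hN
    let f : N →+ ↥(X.i (le_top : p ≤ ⊤)).range :=
      ((X.i (le_top : p ≤ ⊤)).rangeRestrict).comp N.subtype
    have hf : ∀ x ∈ (X.dd (bot_le : (⊥ : I) ≤ p) (le_top : p ≤ ⊤)).range.addSubgroupOf N,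
        f x = 0 := by
      rintro ⟨x, hx⟩ hmem
      obtain ⟨w, hw⟩ := AddSubgroup.mem_addSubgroupOf.mp hmem
      rw [X.dd_bot_apply _ _] at hw
      apply Subtype.ext
      show X.i (le_top : p ≤ ⊤) x = 0
      have hw' : X.k (le_top : p ≤ ⊤) w = x := hw
      rw [← hw']
      exact X.i_k_apply (le_top : p ≤ ⊤) w
    refine ⟨QuotientAddGroup.lift _ f (have h : _ ≤ f.ker := fun x hx => hf x hx; h), fun u hu => Subtype.ext rfl, ?_, ?_⟩
    · -- injective
      rw [injective_iff_map_eq_zero]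
      intro a ha
      induction a using QuotientAddGroup.induction_on with
      | H x =>
        obtain ⟨u, hu⟩ := x
        rw [QuotientAddGroup.lift_mk] at ha
        have hiu : X.i (le_top : p ≤ ⊤) u = 0 := congrArg Subtype.val ha
        obtain ⟨w, hw⟩ := X.mem_range_k_of_i_eq_zero (le_top : p ≤ ⊤) hiu
        rw [QuotientAddGroup.eq_zero_iff]
        refine AddSubgroup.mem_addSubgroupOf.mpr ⟨w, ?_⟩
        rw [X.dd_bot_apply _ _]
        exact hw
    · -- surjective
      rintro ⟨v, u, rfl⟩
      have hu : u ∈ N := by rw [hkertop]; trivial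
      exact ⟨QuotientAddGroup.mk ⟨u, hu⟩, Subtype.ext rfl⟩
  · -- G_q ≤ G_p
    rintro v ⟨u, rfl⟩
    exact ⟨X.i hqp u, X.i_comp_apply hqp le_top u⟩
  · -- the surjection ψ
    set M := (X.dd (bot_le : (⊥ : I) ≤ q) hqp).ker with hM
    have hjmem : ∀ u : X.D p, X.j hqp u ∈ M := by
      intro u
      show X.dd _ hqp (X.j hqp u) = 0
      rw [X.dd_bot_apply _ hqp, X.k_j_apply]
    let θ : X.D p →+ X.Sterm (bot_le : (⊥ : I) ≤ q) hqp le_top :=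
      (QuotientAddGroup.mk'
        ((X.dd hqp (le_top : p ≤ ⊤)).range.addSubgroupOf M)).comp
        ((X.j hqp).codRestrict M hjmem)
    have hθ : ∀ u ∈ (X.i (le_top : p ≤ ⊤)).ker, θ u = 0 := by
      intro u hu
      obtain ⟨w, hw⟩ := X.mem_range_k_of_i_eq_zero (le_top : p ≤ ⊤) hu
      show QuotientAddGroup.mk _ = 0
      rw [QuotientAddGroup.eq_zero_iff]
      refine AddSubgroup.mem_addSubgroupOf.mpr ⟨w, ?_⟩
      show X.j hqp (X.k (le_top : p ≤ ⊤) w) = X.j hqp u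
      rw [hw]
    let e := QuotientAddGroup.quotientKerEquivRange (X.i (le_top : p ≤ ⊤))
    have he : ∀ u : X.D p,
        e.symm ⟨X.i (le_top : p ≤ ⊤) u, AddMonoidHom.mem_range.mpr ⟨u, rfl⟩⟩ =
          QuotientAddGroup.mk u := by
      intro u
      apply e.injective
      rw [AddEquiv.apply_symm_apply]
      exact (Subtype.ext rfl).symm
    let ψ : ↥(X.i (le_top : p ≤ ⊤)).range →+
        X.Sterm (bot_le : (⊥ : I) ≤ q) hqp le_top :=
      (QuotientAddGroup.lift _ θ (have h : _ ≤ θ.ker := fun x hx => hθ x hx; h)).comp e.symm.toAddMonoidHom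
    have hspec : ∀ (u : X.D p)
        (hker : X.j hqp u ∈ (X.dd (bot_le : (⊥ : I) ≤ q) hqp).ker),
        ψ ⟨X.i (le_top : p ≤ ⊤) u, AddMonoidHom.mem_range.mpr ⟨u, rfl⟩⟩ =
          X.Scls (bot_le : (⊥ : I) ≤ q) hqp le_top hker := by
      intro u hker
      show QuotientAddGroup.lift _ θ (have h : _ ≤ θ.ker := fun x hx => hθ x hx; h) (e.symm _) = _
      rw [he u, QuotientAddGroup.lift_mk]
      exact congrArg QuotientAddGroup.mk rfl
    have hsurj : Surjective ψ := by
      intro s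
      induction s using QuotientAddGroup.induction_on with
      | H x =>
        obtain ⟨x, hx⟩ := x
        have hkx : X.k hqp x = 0 := by
          rw [← X.dd_bot_apply (bot_le : (⊥ : I) ≤ q) hqp x]; exact hx
        obtain ⟨u, hu⟩ := X.mem_range_j_of_k_eq_zero hqp hkx
        refine ⟨⟨X.i (le_top : p ≤ ⊤) u, AddMonoidHom.mem_range.mpr ⟨u, rfl⟩⟩, ?_⟩
        rw [hspec u (hu ▸ hx)]
        exact congrArg QuotientAddGroup.mk (Subtype.ext hu)
    have hker : ψ.ker = ((X.i (le_top : q ≤ ⊤)).range).addSubgroupOf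
        (X.i (le_top : p ≤ ⊤)).range := by
      ext x
      obtain ⟨v, hv⟩ := x
      obtain ⟨u, rfl⟩ := hv
      have hx : (⟨X.i (le_top : p ≤ ⊤) u, ⟨u, rfl⟩⟩ :
          ↥(X.i (le_top : p ≤ ⊤)).range) =
          ⟨X.i (le_top : p ≤ ⊤) u, AddMonoidHom.mem_range.mpr ⟨u, rfl⟩⟩ :=
        Subtype.ext rfl
      rw [AddMonoidHom.mem_ker, hx, hspec u (hjmem u)]
      rw [ExactCoupleSystem.Scls, QuotientAddGroup.eq_zero_iff,
        AddSubgroup.mem_addSubgroupOf, AddSubgroup.mem_addSubgroupOf]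
      constructor
      · rintro ⟨w, hw⟩
        have hw' : X.j hqp (u - X.k (le_top : p ≤ ⊤) w) = 0 := by
          have : X.j hqp (X.k (le_top : p ≤ ⊤) w) = X.j hqp u := hw
          rw [map_sub, this, sub_self]
        obtain ⟨v', hv'⟩ := X.mem_range_i_of_j_eq_zero hqp hw'
        refine ⟨v', ?_⟩
        have : X.i (le_top : p ≤ ⊤) (u - X.k (le_top : p ≤ ⊤) w) =
            X.i (le_top : p ≤ ⊤) u := by
          rw [map_sub, X.i_k_apply (le_top : p ≤ ⊤) w, sub_zero]
        calc X.i (le_top : q ≤ ⊤) v'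
            = X.i (le_top : p ≤ ⊤) (X.i hqp v') := (X.i_comp_apply hqp le_top v').symm
          _ = X.i (le_top : p ≤ ⊤) u := by rw [hv', this]
      · rintro ⟨v', hv'⟩
        have h0 : X.i (le_top : p ≤ ⊤) (u - X.i hqp v') = 0 := by
          rw [map_sub, X.i_comp_apply hqp le_top v', sub_eq_zero]
          exact hv'.symm
        obtain ⟨w, hw⟩ := X.mem_range_k_of_i_eq_zero (le_top : p ≤ ⊤) h0
        refine ⟨w, ?_⟩
        show X.j hqp (X.k (le_top : p ≤ ⊤) w) = X.j hqp u
        rw [hw, map_sub, X.j_i_apply hqp v', sub_zero]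
    exact ⟨ψ, hspec, hsurj, hker,
      ⟨(QuotientAddGroup.quotientKerEquivOfSurjective ψ hsurj).symm.trans
        (QuotientAddGroup.quotientAddEquivOfEq hker)⟩⟩
end

section
/- Let I be a lattice with least element −∞ and greatest element ∞, and let E be an excisive exact couple system over I. Then for all a, b ∈ I: the map ℓ+ℓ : E^a_{a∧b} ⊕ E^b_{a∧b} → E^{a∨b}_{a∧b} (the sum of the two maps ℓ) and the map (ℓ,ℓ) : E^{a∨b}_{a∧b} → E^{a∨b}_b ⊕ E^{a∨b}_a (the pair of the two maps ℓ) are isomorphisms, and the composite (ℓ,ℓ) ∘ (ℓ+ℓ) equals ℓ⊕ℓ, the direct sum of the excision isomorphisms E^a_{a∧b} → E^{a∨b}_b and E^b_{a∧b} → E^{a∨b}_a. -/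
open Function

universe u v

/-- An exact couple system over a bounded lattice is excisive if all the maps
`ℓ : E^a_{a⊓b} → E^{a⊔b}_b` are isomorphisms. -/
def ExactCoupleSystem.IsExcisive {I : Type u} [Lattice I] [BoundedOrder I]
    (X : ExactCoupleSystem.{u, v} I) : Prop :=
  ∀ a b : I, Function.Bijective
    (X.l (inf_le_left : a ⊓ b ≤ a) (le_sup_right : b ≤ a ⊔ b) le_sup_left inf_le_right)

namespace ExactCoupleSystem

variable {I : Type u} [PartialOrder I] [BoundedOrder I] (X : ExactCoupleSystem.{u, v} I)

lemma l_apply_l {p q p' q' p'' q'' : I} (h : q ≤ p) (h' : q' ≤ p') (h'' : q'' ≤ p'')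
    (hp : p ≤ p') (hq : q ≤ q') (hp' : p' ≤ p'') (hq' : q' ≤ q'') (x : X.E p q h) :
    X.l h' h'' hp' hq' (X.l h h' hp hq x) = X.l h h'' (hp.trans hp') (hq.trans hq') x := by
  rw [← X.l_comp h h' h'' hp hq hp' hq']; rfl

lemma eq_zero_self (p : I) (x : X.E p p le_rfl) : x = 0 := by
  have hk : X.k (le_rfl : p ≤ p) x = 0 := by
    have hmem : X.k (le_rfl : p ≤ p) x ∈ (X.k (le_rfl : p ≤ p)).range := ⟨x, rfl⟩
    rw [X.exact_ki le_rfl, AddMonoidHom.mem_ker, X.l_id bot_le] at hmem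
    exact hmem
  have hx : x ∈ (X.l (bot_le : (⊥ : I) ≤ p) (le_rfl : p ≤ p) le_rfl bot_le).range := by
    rw [X.exact_jk le_rfl]; exact AddMonoidHom.mem_ker.mpr hk
  obtain ⟨y, hy⟩ := hx
  have hj : X.l (bot_le : (⊥ : I) ≤ p) (le_rfl : p ≤ p) le_rfl bot_le y = 0 := by
    have hmem : y ∈ (X.l (bot_le : (⊥ : I) ≤ p) (bot_le : (⊥ : I) ≤ p) le_rfl le_rfl).range :=
      ⟨y, by rw [X.l_id bot_le]; rfl⟩
    rw [X.exact_ij le_rfl, AddMonoidHom.mem_ker] at hmem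
    exact hmem
  rw [← hy, hj]

lemma l_apply_eq_zero {p q p' q' : I} (m : I) (h : q ≤ p) (h' : q' ≤ p')
    (hp : p ≤ p') (hq : q ≤ q')
    (hpm : p ≤ m) (hqm : q ≤ m) (hmp : m ≤ p') (hmq : m ≤ q') (x : X.E p q h) :
    X.l h h' hp hq x = 0 := by
  have h1 : X.l h h' hp hq x
      = X.l (le_rfl : m ≤ m) h' hmp hmq (X.l h le_rfl hpm hqm x) :=
    (X.l_apply_l h le_rfl h' hpm hqm hmp hmq x).symm
  rw [h1, X.eq_zero_self m (X.l h le_rfl hpm hqm x), map_zero]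

lemma l_bijective_of_le_le {p q p' q' : I} (h : q ≤ p) (h' : q' ≤ p')
    (hp : p ≤ p') (hq : q ≤ q') (hp' : p' ≤ p) (hq' : q' ≤ q) :
    Bijective (X.l h h' hp hq) := by
  have h1 : ∀ x, X.l h' h hp' hq' (X.l h h' hp hq x) = x := by
    intro x
    rw [X.l_apply_l h h' h hp hq hp' hq',
      show X.l h h (hp.trans hp') (hq.trans hq') = AddMonoidHom.id _ from X.l_id h]
    rfl
  have h2 : ∀ x, X.l h h' hp hq (X.l h' h hp' hq' x) = x := by
    intro x
    rw [X.l_apply_l h' h h' hp' hq' hp hq,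
      show X.l h' h' (hp'.trans hp) (hq'.trans hq) = AddMonoidHom.id _ from X.l_id h']
    rfl
  constructor
  · intro x y hxy
    have := congrArg (X.l h' h hp' hq') hxy
    rwa [h1, h1] at this
  · intro y
    exact ⟨X.l h' h hp' hq' y, h2 y⟩

end ExactCoupleSystem

/-- Splitting principle for the 1-page: for an excisive exact couple system
over a bounded lattice, `ℓ+ℓ : E^a_{a⊓b} ⊕ E^b_{a⊓b} → E^{a⊔b}_{a⊓b}` and
`(ℓ,ℓ) : E^{a⊔b}_{a⊓b} → E^{a⊔b}_b ⊕ E^{a⊔b}_a` are isomorphisms, and their composite is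
the direct sum of the two excision isomorphisms. -/
theorem statement16 {I : Type u} [Lattice I] [BoundedOrder I]
    (X : ExactCoupleSystem.{u, v} I) (hexc : X.IsExcisive) (a b : I) :
    Bijective
      ((X.l (inf_le_left : a ⊓ b ≤ a) (inf_le_left.trans le_sup_left : a ⊓ b ≤ a ⊔ b)
          le_sup_left le_rfl).coprod
        (X.l (inf_le_right : a ⊓ b ≤ b) (inf_le_left.trans le_sup_left : a ⊓ b ≤ a ⊔ b)
          le_sup_right le_rfl)) ∧
    Bijective
      ((X.l (inf_le_left.trans le_sup_left : a ⊓ b ≤ a ⊔ b) (le_sup_right : b ≤ a ⊔ b)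
          le_rfl inf_le_right).prod
        (X.l (inf_le_left.trans le_sup_left : a ⊓ b ≤ a ⊔ b) (le_sup_left : a ≤ a ⊔ b)
          le_rfl inf_le_left)) ∧
    ((X.l (inf_le_left.trans le_sup_left : a ⊓ b ≤ a ⊔ b) (le_sup_right : b ≤ a ⊔ b)
          le_rfl inf_le_right).prod
        (X.l (inf_le_left.trans le_sup_left : a ⊓ b ≤ a ⊔ b) (le_sup_left : a ≤ a ⊔ b)
          le_rfl inf_le_left)).comp
      ((X.l (inf_le_left : a ⊓ b ≤ a) (inf_le_left.trans le_sup_left : a ⊓ b ≤ a ⊔ b)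
          le_sup_left le_rfl).coprod
        (X.l (inf_le_right : a ⊓ b ≤ b) (inf_le_left.trans le_sup_left : a ⊓ b ≤ a ⊔ b)
          le_sup_right le_rfl)) =
      AddMonoidHom.prodMap
        (X.l (inf_le_left : a ⊓ b ≤ a) (le_sup_right : b ≤ a ⊔ b) le_sup_left inf_le_right)
        (X.l (inf_le_right : a ⊓ b ≤ b) (le_sup_left : a ≤ a ⊔ b) le_sup_right
          inf_le_left) := by
  have hQa : a ⊓ b ≤ a := inf_le_left
  have hQb : a ⊓ b ≤ b := inf_le_right
  have hQP : a ⊓ b ≤ a ⊔ b := inf_le_left.trans le_sup_left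
  have haP : a ≤ a ⊔ b := le_sup_left
  have hbP : b ≤ a ⊔ b := le_sup_right
  -- the cross terms vanish
  have hzb : ∀ y : X.E b (a ⊓ b) hQb,
      X.l hQP hbP le_rfl hQb (X.l hQb hQP hbP le_rfl y) = 0 := by
    intro y
    rw [X.l_apply_l]
    exact X.l_apply_eq_zero b hQb hbP _ _ le_rfl hQb hbP le_rfl y
  have hza : ∀ x : X.E a (a ⊓ b) hQa,
      X.l hQP haP le_rfl hQa (X.l hQa hQP haP le_rfl x) = 0 := by
    intro x
    rw [X.l_apply_l]
    exact X.l_apply_eq_zero a hQa haP _ _ le_rfl hQa haP le_rfl x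
  -- `g' : E^b_{a⊓b} → E^{a⊔b}_a` is bijective
  have hgbij : Bijective (X.l hQb haP hbP hQa) := by
    have hpre : Bijective (X.l hQb (inf_le_left : b ⊓ a ≤ b) le_rfl (le_of_eq (inf_comm a b))) :=
      X.l_bijective_of_le_le _ _ _ _ le_rfl (le_of_eq (inf_comm b a))
    have hpost : Bijective (X.l (le_sup_right : a ≤ b ⊔ a) haP (le_of_eq (sup_comm b a)) le_rfl) :=
      X.l_bijective_of_le_le _ _ _ _ (le_of_eq (sup_comm a b)) le_rfl
    have heq : ⇑(X.l hQb haP hbP hQa) =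
        ⇑(X.l (le_sup_right : a ≤ b ⊔ a) haP (le_of_eq (sup_comm b a)) le_rfl) ∘
        ⇑(X.l (inf_le_left : b ⊓ a ≤ b) (le_sup_right : a ≤ b ⊔ a) le_sup_left inf_le_right) ∘
        ⇑(X.l hQb (inf_le_left : b ⊓ a ≤ b) le_rfl (le_of_eq (inf_comm a b))) := by
      funext x
      simp only [Function.comp_apply]
      rw [X.l_apply_l, X.l_apply_l]
    rw [show Bijective (X.l hQb haP hbP hQa) = Bijective ⇑(X.l hQb haP hbP hQa) from rfl, heq]
    exact (hpost.comp (hexc b a)).comp hpre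
  -- the composite equality
  have hcomp :
      ((X.l hQP hbP le_rfl hQb).prod (X.l hQP haP le_rfl hQa)).comp
        ((X.l hQa hQP haP le_rfl).coprod (X.l hQb hQP hbP le_rfl)) =
      AddMonoidHom.prodMap (X.l hQa hbP haP hQb) (X.l hQb haP hbP hQa) := by
    apply AddMonoidHom.ext
    rintro ⟨x, y⟩
    show (X.l hQP hbP le_rfl hQb (X.l hQa hQP haP le_rfl x + X.l hQb hQP hbP le_rfl y),
          X.l hQP haP le_rfl hQa (X.l hQa hQP haP le_rfl x + X.l hQb hQP hbP le_rfl y)) =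
        (X.l hQa hbP haP hQb x, X.l hQb haP hbP hQa y)
    rw [map_add, map_add, hzb y, hza x, add_zero, zero_add, X.l_apply_l, X.l_apply_l]
  -- injectivity of `v`
  have hker : ∀ x : X.E (a ⊔ b) (a ⊓ b) hQP,
      X.l hQP hbP le_rfl hQb x = 0 → X.l hQP haP le_rfl hQa x = 0 → x = 0 := by
    intro x hx1 hx2
    -- `i (k x) = 0` in `D_b`
    have h1 : X.l (bot_le : (⊥ : I) ≤ a ⊓ b) (bot_le : (⊥ : I) ≤ b) hQb le_rfl
        (X.k hQP x) = 0 := by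
      have h := DFunLike.congr_fun (X.k_nat hQP hbP le_rfl hQb) x
      simp only [AddMonoidHom.comp_apply] at h
      rw [h, hx1, map_zero]
    -- so `k x = k y` for some `y : E^b_{a⊓b}`
    have h2 : X.k hQP x ∈ (X.k hQb).range := by
      rw [X.exact_ki hQb]; exact AddMonoidHom.mem_ker.mpr h1
    obtain ⟨y, hy⟩ := h2
    -- so `x - ℓ y = j z` for some `z : D_{a⊔b}`
    have h3 : X.k hQP (x - X.l hQb hQP hbP le_rfl y) = 0 := by
      have h := DFunLike.congr_fun (X.k_nat hQb hQP hbP le_rfl) y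
      simp only [AddMonoidHom.comp_apply, X.l_id, AddMonoidHom.id_apply] at h
      rw [map_sub, ← h, hy, sub_self]
    have h4 : x - X.l hQb hQP hbP le_rfl y ∈
        (X.l (bot_le : (⊥ : I) ≤ a ⊔ b) hQP le_rfl bot_le).range := by
      rw [X.exact_jk hQP]; exact AddMonoidHom.mem_ker.mpr h3
    obtain ⟨z, hz⟩ := h4
    -- `j_{P,b} z = 0`, so `z = i w` for some `w : D_b`
    have h5 : X.l (bot_le : (⊥ : I) ≤ a ⊔ b) hbP le_rfl bot_le z = 0 := by
      have h := congrArg (X.l hQP hbP le_rfl hQb) hz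
      rw [X.l_apply_l, map_sub, hx1, hzb y, sub_self] at h
      exact h
    have h6 : z ∈ (X.l (bot_le : (⊥ : I) ≤ b) (bot_le : (⊥ : I) ≤ a ⊔ b) hbP le_rfl).range := by
      rw [X.exact_ij hbP]; exact AddMonoidHom.mem_ker.mpr h5
    obtain ⟨w, hw⟩ := h6
    -- `g' (y + j_{b,Q} w) = 0`, hence `y = - j_{b,Q} w`
    have hA := congrArg (X.l hQP haP le_rfl hQa) hz
    rw [map_sub, hx2, X.l_apply_l, X.l_apply_l, zero_sub, ← hw, X.l_apply_l] at hA
    have h7 : X.l hQb haP hbP hQa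
        (y + X.l (bot_le : (⊥ : I) ≤ b) hQb le_rfl bot_le w) = 0 := by
      rw [map_add, X.l_apply_l, hA]
      exact add_neg_cancel _
    have h8 : y + X.l (bot_le : (⊥ : I) ≤ b) hQb le_rfl bot_le w = 0 :=
      hgbij.injective (by rw [h7, map_zero])
    -- conclude `x = 0`
    have h9 : X.l hQb hQP hbP le_rfl y =
        -(X.l (bot_le : (⊥ : I) ≤ a ⊔ b) hQP le_rfl bot_le z) := by
      rw [eq_neg_of_add_eq_zero_left h8, map_neg, X.l_apply_l, ← hw, X.l_apply_l]
    calc x = (x - X.l hQb hQP hbP le_rfl y) + X.l hQb hQP hbP le_rfl y := by abel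
      _ = X.l (bot_le : (⊥ : I) ≤ a ⊔ b) hQP le_rfl bot_le z
          + X.l hQb hQP hbP le_rfl y := by rw [hz]
      _ = 0 := by rw [h9]; exact add_neg_cancel _
  have hvinj : Injective ⇑((X.l hQP hbP le_rfl hQb).prod (X.l hQP haP le_rfl hQa)) := by
    refine (injective_iff_map_eq_zero _).mpr fun x hx => ?_
    exact hker x (congrArg Prod.fst hx) (congrArg Prod.snd hx)
  -- the direct sum of the excision isomorphisms is bijective
  have hpm : Bijective ⇑(AddMonoidHom.prodMap (X.l hQa hbP haP hQb) (X.l hQb haP hbP hQa)) := by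
    rw [AddMonoidHom.coe_prodMap]
    exact (hexc a b).prodMap hgbij
  have hvu : Bijective (⇑((X.l hQP hbP le_rfl hQb).prod (X.l hQP haP le_rfl hQa)) ∘
      ⇑((X.l hQa hQP haP le_rfl).coprod (X.l hQb hQP hbP le_rfl))) := by
    rw [← AddMonoidHom.coe_comp, hcomp]
    exact hpm
  have hvsurj : Surjective ⇑((X.l hQP hbP le_rfl hQb).prod (X.l hQP haP le_rfl hQa)) :=
    hvu.surjective.of_comp
  refine ⟨⟨hvu.injective.of_comp, ?_⟩, ⟨hvinj, hvsurj⟩, hcomp⟩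
  intro t
  obtain ⟨s, hs⟩ := hvu.surjective
    (((X.l hQP hbP le_rfl hQb).prod (X.l hQP haP le_rfl hQa)) t)
  exact ⟨s, hvinj hs⟩
end

section
/- Let I be a closed set system (a family of subsets of a fixed set closed under arbitrary unions and intersections, ordered by inclusion, with least element ⋂I and greatest element ⋃I) and let E be an excisive exact couple system over I. Let z ⊆ q ⊆ p ⊆ b and z' ⊆ q' ⊆ p' ⊆ b' be quadruples in I with b∖p = b'∖p', p∖q = p'∖q', and q∖z = q'∖z'. Set b'' := b∪b', p'' := p∪p', q'' := q∪q', z'' := z∪z' (then z'' ⊆ q'' ⊆ p'' ⊆ b''). Then the ℓ-induced maps S^{pz}_{bq} → S^{p''z''}_{b''q''} and S^{p'z'}_{b'q'} → S^{p''z''}_{b''q''} are isomorphisms; in particular S^{pz}_{bq} ≅ S^{p'z'}_{b'q'}. -/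
open Function

universe u v

/-- A closed set system: a family of subsets of `α` closed under arbitrary unions and
intersections, regarded as a type (the elements of the family), ordered by inclusion. -/
def CSS {α : Type*} (S : Set (Set α)) (_ : ∀ T ⊆ S, ⋃₀ T ∈ S) (_ : ∀ T ⊆ S, ⋂₀ T ∈ S) :
    Type _ := ↥S

namespace CSS

variable {α : Type*} {S : Set (Set α)} {hU : ∀ T ⊆ S, ⋃₀ T ∈ S} {hI : ∀ T ⊆ S, ⋂₀ T ∈ S}

/-- The underlying set of a member of a closed set system. -/
def toSet (a : CSS S hU hI) : Set α := Subtype.val a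

lemma union_mem (a b : CSS S hU hI) : a.toSet ∪ b.toSet ∈ S := by
  have h : a.toSet ∪ b.toSet = ⋃₀ {a.toSet, b.toSet} := by
    simp [Set.sUnion_pair]
  rw [h]
  refine hU _ ?_
  rintro t (rfl | rfl)
  · exact a.2
  · exact b.2

lemma inter_mem (a b : CSS S hU hI) : a.toSet ∩ b.toSet ∈ S := by
  have h : a.toSet ∩ b.toSet = ⋂₀ {a.toSet, b.toSet} := by
    simp [Set.sInter_pair]
  rw [h]
  refine hI _ ?_
  rintro t (rfl | rfl)
  · exact a.2
  · exact b.2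

instance : Lattice (CSS S hU hI) where
  le a b := a.toSet ⊆ b.toSet
  le_refl a := subset_rfl
  le_trans a b c hab hbc := show a.toSet ⊆ c.toSet from Set.Subset.trans hab hbc
  le_antisymm a b hab hba := Subtype.ext (subset_antisymm hab hba)
  sup a b := ⟨a.toSet ∪ b.toSet, union_mem a b⟩
  le_sup_left a b := Set.subset_union_left
  le_sup_right a b := Set.subset_union_right
  sup_le a b c hac hbc := Set.union_subset hac hbc
  inf a b := ⟨a.toSet ∩ b.toSet, inter_mem a b⟩
  inf_le_left a b := Set.inter_subset_left
  inf_le_right a b := Set.inter_subset_right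
  le_inf a b c hab hac := Set.subset_inter hab hac

instance : BoundedOrder (CSS S hU hI) where
  top := ⟨Set.univ, by simpa using hI ∅ (Set.empty_subset S)⟩
  le_top a := show a.toSet ⊆ Set.univ from Set.subset_univ _
  bot := ⟨∅, by simpa using hU ∅ (Set.empty_subset S)⟩
  bot_le a := show ∅ ⊆ a.toSet from Set.empty_subset _

end CSS

section SubQuot

variable {A B C A' B' C' : Type*} [AddCommGroup A] [AddCommGroup B] [AddCommGroup C]
  [AddCommGroup A'] [AddCommGroup B'] [AddCommGroup C']

theorem subquot_bij
    (d : A →+ B) (e : C →+ A) (d' : A' →+ B') (e' : C' →+ A')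
    (lA : A →+ A') (lB : B →+ B') (lC : C →+ C')
    (comm1 : lB.comp d = d'.comp lA) (comm2 : lA.comp e = e'.comp lC)
    (hlA : Function.Bijective lA) (hlB : Function.Injective lB)
    (hlC : Function.Surjective lC) :
    ∃ f : (↥d.ker ⧸ e.range.addSubgroupOf d.ker) →+
        (↥d'.ker ⧸ e'.range.addSubgroupOf d'.ker),
      (∀ (x : A) (hx : x ∈ d.ker) (hx' : lA x ∈ d'.ker),
        f (QuotientAddGroup.mk ⟨x, hx⟩) = QuotientAddGroup.mk ⟨lA x, hx'⟩) ∧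
      Function.Bijective f := by
  have hcomm1 : ∀ x : A, lB (d x) = d' (lA x) := fun x => DFunLike.congr_fun comm1 x
  have hcomm2 : ∀ x : C, lA (e x) = e' (lC x) := fun x => DFunLike.congr_fun comm2 x
  have hker : ∀ x : A, x ∈ d.ker → lA x ∈ d'.ker := by
    intro x hx
    rw [AddMonoidHom.mem_ker] at hx ⊢
    rw [← hcomm1, hx, map_zero]
  set g : ↥d.ker →+ ↥d'.ker :=
    (lA.comp d.ker.subtype).codRestrict d'.ker (fun x => hker x.1 x.2) with hg
  have hle : e.range.addSubgroupOf d.ker ≤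
      (e'.range.addSubgroupOf d'.ker).comap g := by
    rintro ⟨x, hx⟩ hmem
    rw [AddSubgroup.mem_addSubgroupOf] at hmem
    obtain ⟨c, hc⟩ := hmem
    rw [AddSubgroup.mem_comap, AddSubgroup.mem_addSubgroupOf]
    exact ⟨lC c, by simp [hg, ← hcomm2, hc]; rfl⟩
  refine ⟨QuotientAddGroup.map _ _ g hle, fun x hx hx' => rfl, ?_, ?_⟩
  · rw [injective_iff_map_eq_zero]
    intro a
    induction a using QuotientAddGroup.induction_on with
    | H x =>
      intro h
      rw [QuotientAddGroup.map_mk, QuotientAddGroup.eq_zero_iff,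
        AddSubgroup.mem_addSubgroupOf] at h
      obtain ⟨c', hc'⟩ := h
      obtain ⟨c, rfl⟩ := hlC c'
      rw [QuotientAddGroup.eq_zero_iff, AddSubgroup.mem_addSubgroupOf]
      refine ⟨c, hlA.1 ?_⟩
      rw [hcomm2]
      exact hc'
  · intro y
    induction y using QuotientAddGroup.induction_on with
    | H y =>
      obtain ⟨x, hx⟩ := hlA.2 y.1
      have hxk : x ∈ d.ker := by
        rw [AddMonoidHom.mem_ker]
        apply hlB
        rw [hcomm1, hx, map_zero]
        exact y.2
      exact ⟨QuotientAddGroup.mk ⟨x, hxk⟩, by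
        rw [QuotientAddGroup.map_mk]
        congr 1
        exact Subtype.ext hx⟩

end SubQuot

theorem set_excision' {α : Type*} {P Q P' Q' : Set α} (h : Q ⊆ P) (h' : Q' ⊆ P')
    (hd : P \ Q = P' \ Q') :
    P ∩ (Q ∪ Q') = Q ∧ P ∪ (Q ∪ Q') = P ∪ P' := by
  constructor
  · apply subset_antisymm
    · rintro x ⟨hxP, hxQ | hxQ'⟩
      · exact hxQ
      · by_contra hxQ
        have : x ∈ P' \ Q' := hd ▸ ⟨hxP, hxQ⟩
        exact this.2 hxQ'
    · exact fun x hx => ⟨h hx, Or.inl hx⟩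
  · apply subset_antisymm
    · exact Set.union_subset Set.subset_union_left
        (Set.union_subset ((h.trans Set.subset_union_left))
          (h'.trans Set.subset_union_right))
    · refine Set.union_subset Set.subset_union_left (fun x hx => ?_)
      by_cases hxQ' : x ∈ Q'
      · exact Or.inr (Or.inr hxQ')
      · have : x ∈ P \ Q := hd.symm ▸ ⟨hx, hxQ'⟩
        exact Or.inl this.1

section Aux

variable {I : Type u} [PartialOrder I] [BoundedOrder I] (X : ExactCoupleSystem.{u, v} I)

lemma ExactCoupleSystem.dd_nat {z q p z' q' p' : I} (hzq : z ≤ q) (hqp : q ≤ p) (hzq' : z' ≤ q') (hqp' : q' ≤ p')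
    (hz : z ≤ z') (hq : q ≤ q') (hp : p ≤ p') :
    (X.l hzq hzq' hq hz).comp (X.dd hzq hqp) = (X.dd hzq' hqp').comp (X.l hqp hqp' hp hq) := by
  unfold ExactCoupleSystem.dd ExactCoupleSystem.j
  rw [← AddMonoidHom.comp_assoc, X.l_comp, AddMonoidHom.comp_assoc, ← X.k_nat hqp hqp' hp hq,
      ← AddMonoidHom.comp_assoc, X.l_comp]

end Aux

lemma excision_bij {I : Type u} [Lattice I] [BoundedOrder I] (X : ExactCoupleSystem.{u, v} I)
    (hexc : X.IsExcisive) {a b P Q : I} (e1 : Q = a ⊓ b) (e2 : P = a ⊔ b)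
    (h1 : Q ≤ a) (h2 : b ≤ P) (hap : a ≤ P) (hqb : Q ≤ b) :
    Function.Bijective (X.l h1 h2 hap hqb) := by
  subst e1; subst e2; exact hexc a b


/-- Natural isomorphisms 1: for an excisive exact couple system over a
closed set system, two quadruples `z ⊆ q ⊆ p ⊆ b` and `z' ⊆ q' ⊆ p' ⊆ b'` with
`b∖p = b'∖p'`, `p∖q = p'∖q'`, `q∖z = q'∖z'` have, with `p'' := p ∪ p'` etc., `ℓ`-induced
isomorphisms `S^{pz}_{bq} → S^{p''z''}_{b''q''} ← S^{p'z'}_{b'q'}`; in particular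
`S^{pz}_{bq} ≅ S^{p'z'}_{b'q'}`. -/
theorem statement18 {α : Type u} {S : Set (Set α)} {hU : ∀ T ⊆ S, ⋃₀ T ∈ S}
    {hI : ∀ T ⊆ S, ⋂₀ T ∈ S} (X : ExactCoupleSystem.{u, v} (CSS S hU hI))
    (hexc : X.IsExcisive) {z q p b z' q' p' b' : CSS S hU hI}
    (hzq : z ≤ q) (hqp : q ≤ p) (hpb : p ≤ b)
    (hzq' : z' ≤ q') (hqp' : q' ≤ p') (hpb' : p' ≤ b')
    (hbp : b.toSet \ p.toSet = b'.toSet \ p'.toSet)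
    (hpq : p.toSet \ q.toSet = p'.toSet \ q'.toSet)
    (hqz : q.toSet \ z.toSet = q'.toSet \ z'.toSet) :
    ∃ (f : X.Sterm hzq hqp hpb →+
        X.Sterm (sup_le_sup hzq hzq') (sup_le_sup hqp hqp') (sup_le_sup hpb hpb'))
      (f' : X.Sterm hzq' hqp' hpb' →+
        X.Sterm (sup_le_sup hzq hzq') (sup_le_sup hqp hqp') (sup_le_sup hpb hpb')),
      (∀ (u : X.E p q hqp) (hu : u ∈ (X.dd hzq hqp).ker)
        (hu' : X.l hqp (sup_le_sup hqp hqp') le_sup_left le_sup_left u ∈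
          (X.dd (sup_le_sup hzq hzq') (sup_le_sup hqp hqp')).ker),
        f (X.Scls hzq hqp hpb hu) =
          X.Scls (sup_le_sup hzq hzq') (sup_le_sup hqp hqp') (sup_le_sup hpb hpb') hu') ∧
      (∀ (u : X.E p' q' hqp') (hu : u ∈ (X.dd hzq' hqp').ker)
        (hu' : X.l hqp' (sup_le_sup hqp hqp') le_sup_right le_sup_right u ∈
          (X.dd (sup_le_sup hzq hzq') (sup_le_sup hqp hqp')).ker),
        f' (X.Scls hzq' hqp' hpb' hu) =
          X.Scls (sup_le_sup hzq hzq') (sup_le_sup hqp hqp') (sup_le_sup hpb hpb') hu') ∧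
      Bijective f ∧ Bijective f' ∧
      Nonempty (X.Sterm hzq hqp hpb ≃+ X.Sterm hzq' hqp' hpb') := by
  have keyA := set_excision' (show q.toSet ⊆ p.toSet from hqp)
    (show q'.toSet ⊆ p'.toSet from hqp') hpq
  have keyB := set_excision' (show z.toSet ⊆ q.toSet from hzq)
    (show z'.toSet ⊆ q'.toSet from hzq') hqz
  have keyC := set_excision' (show p.toSet ⊆ b.toSet from hpb)
    (show p'.toSet ⊆ b'.toSet from hpb') hbp
  have keyA' := set_excision' (show q'.toSet ⊆ p'.toSet from hqp')
    (show q.toSet ⊆ p.toSet from hqp) hpq.symm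
  have keyB' := set_excision' (show z'.toSet ⊆ q'.toSet from hzq')
    (show z.toSet ⊆ q.toSet from hzq) hqz.symm
  have keyC' := set_excision' (show p'.toSet ⊆ b'.toSet from hpb')
    (show p.toSet ⊆ b.toSet from hpb) hbp.symm
  have hlA : Function.Bijective (X.l hqp (sup_le_sup hqp hqp') le_sup_left le_sup_left) :=
    excision_bij X hexc (a := p) (b := q ⊔ q') (Subtype.ext keyA.1.symm)
      (Subtype.ext keyA.2.symm) _ _ _ _
  have hlB : Function.Bijective (X.l hzq (sup_le_sup hzq hzq') le_sup_left le_sup_left) :=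
    excision_bij X hexc (a := q) (b := z ⊔ z') (Subtype.ext keyB.1.symm)
      (Subtype.ext keyB.2.symm) _ _ _ _
  have hlC : Function.Bijective (X.l hpb (sup_le_sup hpb hpb') le_sup_left le_sup_left) :=
    excision_bij X hexc (a := b) (b := p ⊔ p') (Subtype.ext keyC.1.symm)
      (Subtype.ext keyC.2.symm) _ _ _ _
  have hlA' : Function.Bijective (X.l hqp' (sup_le_sup hqp hqp') le_sup_right le_sup_right) := by
    refine excision_bij X hexc (a := p') (b := q ⊔ q') (Subtype.ext ?_) (Subtype.ext ?_) _ _ _ _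
    · show q'.toSet = p'.toSet ∩ (q.toSet ∪ q'.toSet)
      rw [Set.union_comm q.toSet q'.toSet]
      exact keyA'.1.symm
    · show p.toSet ∪ p'.toSet = p'.toSet ∪ (q.toSet ∪ q'.toSet)
      rw [Set.union_comm q.toSet q'.toSet, keyA'.2, Set.union_comm]
  have hlB' : Function.Bijective (X.l hzq' (sup_le_sup hzq hzq') le_sup_right le_sup_right) := by
    refine excision_bij X hexc (a := q') (b := z ⊔ z') (Subtype.ext ?_) (Subtype.ext ?_) _ _ _ _
    · show z'.toSet = q'.toSet ∩ (z.toSet ∪ z'.toSet)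
      rw [Set.union_comm z.toSet z'.toSet]
      exact keyB'.1.symm
    · show q.toSet ∪ q'.toSet = q'.toSet ∪ (z.toSet ∪ z'.toSet)
      rw [Set.union_comm z.toSet z'.toSet, keyB'.2, Set.union_comm]
  have hlC' : Function.Bijective (X.l hpb' (sup_le_sup hpb hpb') le_sup_right le_sup_right) := by
    refine excision_bij X hexc (a := b') (b := p ⊔ p') (Subtype.ext ?_) (Subtype.ext ?_) _ _ _ _
    · show p'.toSet = b'.toSet ∩ (p.toSet ∪ p'.toSet)
      rw [Set.union_comm p.toSet p'.toSet]
      exact keyC'.1.symm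
    · show b.toSet ∪ b'.toSet = b'.toSet ∪ (p.toSet ∪ p'.toSet)
      rw [Set.union_comm p.toSet p'.toSet, keyC'.2, Set.union_comm]
  obtain ⟨f, hfmk, hfbij⟩ := subquot_bij (X.dd hzq hqp) (X.dd hqp hpb)
    (X.dd (sup_le_sup hzq hzq') (sup_le_sup hqp hqp'))
    (X.dd (sup_le_sup hqp hqp') (sup_le_sup hpb hpb'))
    (X.l hqp (sup_le_sup hqp hqp') le_sup_left le_sup_left)
    (X.l hzq (sup_le_sup hzq hzq') le_sup_left le_sup_left)
    (X.l hpb (sup_le_sup hpb hpb') le_sup_left le_sup_left)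
    (X.dd_nat hzq hqp (sup_le_sup hzq hzq') (sup_le_sup hqp hqp')
      le_sup_left le_sup_left le_sup_left)
    (X.dd_nat hqp hpb (sup_le_sup hqp hqp') (sup_le_sup hpb hpb')
      le_sup_left le_sup_left le_sup_left)
    hlA hlB.1 hlC.2
  obtain ⟨f', hfmk', hfbij'⟩ := subquot_bij (X.dd hzq' hqp') (X.dd hqp' hpb')
    (X.dd (sup_le_sup hzq hzq') (sup_le_sup hqp hqp'))
    (X.dd (sup_le_sup hqp hqp') (sup_le_sup hpb hpb'))
    (X.l hqp' (sup_le_sup hqp hqp') le_sup_right le_sup_right)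
    (X.l hzq' (sup_le_sup hzq hzq') le_sup_right le_sup_right)
    (X.l hpb' (sup_le_sup hpb hpb') le_sup_right le_sup_right)
    (X.dd_nat hzq' hqp' (sup_le_sup hzq hzq') (sup_le_sup hqp hqp')
      le_sup_right le_sup_right le_sup_right)
    (X.dd_nat hqp' hpb' (sup_le_sup hqp hqp') (sup_le_sup hpb hpb')
      le_sup_right le_sup_right le_sup_right)
    hlA' hlB'.1 hlC'.2
  exact ⟨f, f', fun u hu hu' => hfmk u hu hu', fun u hu hu' => hfmk' u hu hu',
    hfbij, hfbij',
    ⟨(AddEquiv.ofBijective f hfbij).trans (AddEquiv.ofBijective f' hfbij').symm⟩⟩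
end
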